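/- In a quasi Gelfand triple (H₊, H₀, H₋), the adjoint ι₊* of the embedding ι₊ : D₊ ⊆ H₊ → H₀ extends uniquely to a bijective linear isometry Ψ : H₋ → H₊, and H₋ is a Hilbert space with inner product ⟨g,f⟩₋ := ⟨Ψg, Ψf⟩₊, whose induced norm coincides with ‖·‖₋. -/

import Mathlib

open Filter Topology
open scoped ComplexInnerProductSpace

noncomputable section

/-- `(u, v)` belongs to the adjoint relation of the embedding `ι₊ : D₊ ⊆ H₊ → H₀`. -/
def InAdjRel {Hp H₀ : Type*}
    [NormedAddCommGroup Hp] [InnerProductSpace ℂ Hp]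
    [NormedAddCommGroup H₀] [InnerProductSpace ℂ H₀]
    (T : Hp →ₗ.[ℂ] H₀) (u : H₀) (v : Hp) : Prop :=
  ∀ f : T.domain, ⟪u, T f⟫ = ⟪v, (f : Hp)⟫

/-- In a quasi Gelfand triple `(H₊, H₀, H₋)` — `ι₊` densely defined, with
dense range, closed graph and injective, and `H₋` the completion of `D₋ = dom ι₊*` realized by
a norm-preserving map `jm : D₋ → H₋` with dense range — the adjoint `ι₊*` extends uniquely to
a bijective linear isometry `Ψ : H₋ → H₊`, and `H₋` is a Hilbert space whose inner product
satisfies `⟨g,f⟩₋ = ⟨Ψg, Ψf⟩₊`, its norm coinciding with `‖·‖₋`. -/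
theorem stmt9 {Hp H₀ Hm : Type*}
    [NormedAddCommGroup Hp] [InnerProductSpace ℂ Hp] [CompleteSpace Hp]
    [NormedAddCommGroup H₀] [InnerProductSpace ℂ H₀] [CompleteSpace H₀]
    [NormedAddCommGroup Hm] [InnerProductSpace ℂ Hm] [CompleteSpace Hm]
    (T : Hp →ₗ.[ℂ] H₀)
    (hdom : Dense (T.domain : Set Hp))
    (hran : Dense (Set.range fun f : T.domain => T f))
    (hclosed : IsClosed {p : Hp × H₀ | ∃ f : T.domain, (f : Hp) = p.1 ∧ T f = p.2})
    (hinj : ∀ f : T.domain, T f = 0 → (f : Hp) = 0)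
    (jm : H₀ →ₗ.[ℂ] Hm)
    (hjm_dom : (jm.domain : Set H₀) = {u : H₀ | ∃ v : Hp, InAdjRel T u v})
    (hjm_iso : ∀ (u : jm.domain) (v : Hp), InAdjRel T (u : H₀) v → ‖jm u‖ = ‖v‖)
    (hjm_dense : Dense (Set.range fun u : jm.domain => jm u)) :
    ∃! Ψ : Hm →L[ℂ] Hp,
      (∀ (u : jm.domain) (v : Hp), InAdjRel T (u : H₀) v → Ψ (jm u) = v) ∧
      Function.Bijective Ψ ∧
      (∀ a b : Hm, ⟪Ψ a, Ψ b⟫ = ⟪a, b⟫) ∧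
      ∀ a : Hm, ‖Ψ a‖ = ‖a‖ := by
  classical
  -- uniqueness of the adjoint vector
  have huniq : ∀ (u : H₀) (v v' : Hp), InAdjRel T u v → InAdjRel T u v' → v = v' := by
    intro u v v' hv hv'
    exact hdom.eq_of_inner_left ℂ fun f hf => (hv ⟨f, hf⟩).symm.trans (hv' ⟨f, hf⟩)
  -- choose the adjoint vector for every element of `jm.domain`
  have hex : ∀ u : jm.domain, ∃ v : Hp, InAdjRel T (u : H₀) v := by
    intro u
    have : (u : H₀) ∈ (jm.domain : Set H₀) := u.2
    rw [hjm_dom] at this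
    exact this
  choose adj hadj using hex
  -- linearity of `adj`
  have hadd : ∀ u u' : jm.domain, adj (u + u') = adj u + adj u' := by
    intro u u'
    refine huniq _ _ _ (hadj _) ?_
    intro f
    have : ((u + u' : jm.domain) : H₀) = (u : H₀) + (u' : H₀) := rfl
    rw [this, inner_add_left, inner_add_left, hadj u f, hadj u' f]
  have hsmul : ∀ (c : ℂ) (u : jm.domain), adj (c • u) = c • adj u := by
    intro c u
    refine huniq _ _ _ (hadj _) ?_
    intro f
    have : ((c • u : jm.domain) : H₀) = c • (u : H₀) := rfl
    rw [this, inner_smul_left, inner_smul_left, hadj u f]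
  have hsub : ∀ u u' : jm.domain, adj (u - u') = adj u - adj u' := by
    intro u u'
    have h1 : u = (u - u') + u' := by abel
    have := hadd (u - u') u'
    rw [← h1] at this
    exact eq_sub_of_add_eq this.symm
  -- `adj` only depends on `jm u`
  have hwd : ∀ u u' : jm.domain, jm u = jm u' → adj u = adj u' := by
    intro u u' h
    have h2 : ‖jm (u - u')‖ = ‖adj (u - u')‖ := hjm_iso _ _ (hadj _)
    rw [jm.map_sub, h, sub_self, norm_zero] at h2
    have : adj (u - u') = 0 := by
      rw [← norm_eq_zero, ← h2]
    rw [hsub] at this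
    exact sub_eq_zero.mp this
  -- norm identity
  have hnorm_adj : ∀ u : jm.domain, ‖adj u‖ = ‖jm u‖ := fun u =>
    (hjm_iso u (adj u) (hadj u)).symm
  -- the range of `jm` inside `Hm`, as a submodule
  set R : Submodule ℂ Hm := LinearMap.range jm.toFun with hR
  have hmemR : ∀ u : jm.domain, jm u ∈ R := fun u => ⟨u, rfl⟩
  have hRset : (R : Set Hm) = Set.range fun u : jm.domain => jm u := by
    ext y
    simp only [hR, LinearMap.mem_range, SetLike.mem_coe, Set.mem_range]
    rfl
  -- choose preimages
  have hpick : ∀ y : R, ∃ u : jm.domain, jm u = (y : Hm) := fun y => y.2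
  choose pick hpick_spec using hpick
  -- the isometric linear map `g : R → Hp`
  have hgwd : ∀ (y : R) (u : jm.domain), jm u = (y : Hm) → adj (pick y) = adj u := by
    intro y u hu
    exact hwd _ _ ((hpick_spec y).trans hu.symm)
  let g : R →ₗ[ℂ] Hp :=
    { toFun := fun y => adj (pick y)
      map_add' := by
        intro y z
        have h1 : jm (pick y + pick z) = ((y + z : R) : Hm) := by
          rw [jm.map_add, hpick_spec y, hpick_spec z]; rfl
        show adj (pick (y + z)) = adj (pick y) + adj (pick z)
        rw [hgwd (y + z) _ h1, hadd]
      map_smul' := by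
        intro c y
        have h1 : jm (c • pick y) = ((c • y : R) : Hm) := by
          rw [jm.map_smul, hpick_spec y]; rfl
        show adj (pick (c • y)) = c • adj (pick y)
        rw [hgwd (c • y) _ h1, hsmul] }
  have hg_iso : ∀ y : R, ‖g y‖ = ‖y‖ := by
    intro y
    show ‖adj (pick y)‖ = ‖y‖
    rw [hnorm_adj, hpick_spec y]
    rfl
  have hg_apply : ∀ u : jm.domain, g ⟨jm u, hmemR u⟩ = adj u := by
    intro u
    exact hgwd ⟨jm u, hmemR u⟩ u rfl
  let gc : R →L[ℂ] Hp := g.mkContinuous 1 (fun y => by rw [hg_iso, one_mul])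
  have hgc : ∀ y : R, gc y = g y := fun _ => rfl
  -- the inclusion of `R` into `Hm`
  let e : R →L[ℂ] Hm := R.subtypeL
  have he_dense : DenseRange e := by
    have : Set.range ⇑e = (R : Set Hm) := Subtype.range_coe
    rw [DenseRange, this, hRset]
    exact hjm_dense
  have he_ui : IsUniformInducing ⇑e := isUniformEmbedding_subtype_val.isUniformInducing
  -- the extension
  set Ψ : Hm →L[ℂ] Hp := gc.extend e with hΨ
  have hΨe : ∀ y : R, Ψ (y : Hm) = g y := by
    intro y
    have := ContinuousLinearMap.extend_eq gc (e := e) he_dense he_ui y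
    exact this
  have hΨjm : ∀ u : jm.domain, Ψ (jm u) = adj u := by
    intro u
    have := hΨe ⟨jm u, hmemR u⟩
    rw [hg_apply] at this
    exact this
  -- norm preservation
  have hΨnorm : ∀ a : Hm, ‖Ψ a‖ = ‖a‖ := by
    intro a
    refine he_dense.induction_on a ?_ ?_
    · exact isClosed_eq Ψ.continuous.norm continuous_norm
    · intro y
      have : Ψ (e y) = g y := hΨe y
      rw [this, hg_iso]
      rfl
  -- linear isometry
  let Ψli : Hm →ₗᵢ[ℂ] Hp := ⟨Ψ.toLinearMap, hΨnorm⟩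
  have hΨli : ∀ a : Hm, Ψli a = Ψ a := fun _ => rfl
  have hΨinner : ∀ a b : Hm, ⟪Ψ a, Ψ b⟫ = ⟪a, b⟫ := by
    intro a b
    have := Ψli.inner_map_map a b
    rwa [hΨli, hΨli] at this
  -- density of the set of adjoint vectors in Hp
  have hdenseA : ∀ x : Hp, (∀ u : jm.domain, ⟪adj u, x⟫ = 0) → x = 0 := by
    intro x hx
    -- work in ℓ²-product
    set E := WithLp 2 (Hp × H₀) with hE
    let eqv := WithLp.prodContinuousLinearEquiv 2 ℂ Hp H₀
    let L : T.domain →ₗ[ℂ] E :=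
      (WithLp.linearEquiv 2 ℂ (Hp × H₀)).symm.toLinearMap ∘ₗ (T.domain.subtype.prod T.toFun)
    have hL : ∀ f : T.domain, eqv (L f) = ((f : Hp), T f) := fun f => rfl
    set G : Submodule ℂ E := LinearMap.range L with hG
    have hGclosed : IsClosed (G : Set E) := by
      have hset : (G : Set E)
          = ⇑eqv ⁻¹' {p : Hp × H₀ | ∃ f : T.domain, (f : Hp) = p.1 ∧ T f = p.2} := by
        ext z
        constructor
        · rintro ⟨f, rfl⟩
          exact ⟨f, rfl, rfl⟩
        · rintro ⟨f, h1, h2⟩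
          refine ⟨f, ?_⟩
          apply eqv.injective
          rw [hL]
          ext
          · exact h1
          · exact h2
      rw [hset]
      exact hclosed.preimage eqv.continuous
    haveI : CompleteSpace G := hGclosed.completeSpace_coe
    set q : E := (WithLp.equiv 2 (Hp × H₀)).symm (x, 0) with hq
    have hqG : q ∈ G := by
      rw [← Submodule.orthogonal_orthogonal G, Submodule.mem_orthogonal]
      intro z hz
      rw [Submodule.mem_orthogonal] at hz
      -- z is orthogonal to the graph
      set a : Hp := z.ofLp.1 with ha
      set b : H₀ := z.ofLp.2 with hb
      have hzf : ∀ f : T.domain, ⟪(f : Hp), a⟫ + ⟪T f, b⟫ = 0 := by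
        intro f
        have := hz (L f) ⟨f, rfl⟩
        rwa [WithLp.prod_inner_apply] at this
      have hbadj : InAdjRel T b (-a) := by
        intro f
        have h1 := hzf f
        have h2 : ⟪a, (f : Hp)⟫ + ⟪b, T f⟫ = 0 := by
          have := congrArg (starRingEnd ℂ) h1
          simpa [inner_conj_symm] using this
        rw [inner_neg_left]
        linear_combination h2
      have hbmem : b ∈ jm.domain := by
        have : b ∈ (jm.domain : Set H₀) := by
          rw [hjm_dom]
          exact ⟨-a, hbadj⟩
        exact this
      have hadjb : adj ⟨b, hbmem⟩ = -a := huniq b _ _ (hadj ⟨b, hbmem⟩) hbadj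
      have hax : ⟪a, x⟫ = 0 := by
        have := hx ⟨b, hbmem⟩
        rw [hadjb, inner_neg_left, neg_eq_zero] at this
        exact this
      rw [WithLp.prod_inner_apply]
      have hq1 : q.ofLp.1 = x := rfl
      have hq2 : q.ofLp.2 = (0 : H₀) := rfl
      rw [hq1, hq2, inner_zero_right, add_zero]
      exact hax
    obtain ⟨f, hf⟩ := hqG
    have hfx : ((f : Hp), T f) = (x, 0) := by
      have := congrArg (⇑eqv) hf
      rw [hL] at this
      exact this
    have h1 : (f : Hp) = x := congrArg Prod.fst hfx
    have h2 : T f = 0 := congrArg Prod.snd hfx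
    rw [← h1]
    exact hinj f h2
  -- surjectivity
  have hΨisom : Isometry ⇑Ψ := AddMonoidHomClass.isometry_of_norm Ψ hΨnorm
  have hΨclosed : IsClosed (Set.range ⇑Ψ) := hΨisom.isClosedEmbedding.isClosed_range
  have hΨsurj : Function.Surjective ⇑Ψ := by
    intro x
    -- the range of Ψ is a closed submodule whose orthogonal complement is trivial
    set RΨ : Submodule ℂ Hp := LinearMap.range (Ψ : Hm →ₗ[ℂ] Hp) with hRΨ
    have hRΨset : (RΨ : Set Hp) = Set.range ⇑Ψ := by
      ext y; simp only [hRΨ, SetLike.mem_coe, LinearMap.mem_range, Set.mem_range]; rfl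
    have hRΨclosed : IsClosed (RΨ : Set Hp) := by rw [hRΨset]; exact hΨclosed
    have hbot : RΨᗮ = ⊥ := by
      rw [Submodule.eq_bot_iff]
      intro y hy
      refine hdenseA y ?_
      intro u
      exact hy (adj u) ⟨jm u, hΨjm u⟩
    have htop : RΨ = ⊤ := by
      have hclos : RΨ.topologicalClosure = ⊤ :=
        Submodule.topologicalClosure_eq_top_iff.mpr hbot
      rw [← hclos]
      exact (IsClosed.submodule_topologicalClosure_eq hRΨclosed).symm
    have : x ∈ RΨ := by rw [htop]; trivial
    obtain ⟨a, ha⟩ := this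
    exact ⟨a, ha⟩
  have hΨinj : Function.Injective ⇑Ψ := by
    intro a b h
    have : ‖a - b‖ = 0 := by
      rw [← hΨnorm, map_sub, h, sub_self, norm_zero]
    rwa [norm_eq_zero, sub_eq_zero] at this
  -- assemble
  refine ⟨Ψ, ⟨?_, ⟨hΨinj, hΨsurj⟩, hΨinner, hΨnorm⟩, ?_⟩
  · intro u v hv
    rw [hΨjm u]
    exact huniq _ _ _ (hadj u) hv
  · intro Ψ' hΨ'
    obtain ⟨h1, _, _, _⟩ := hΨ'
    apply ContinuousLinearMap.coeFn_injective
    refine Ψ'.continuous.ext_on hjm_dense Ψ.continuous ?_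
    rintro y ⟨u, rfl⟩
    rw [h1 u (adj u) (hadj u)]
    exact (hΨjm u).symm
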